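/- Along solutions the differential of the Hamilton–Pontryagin action reduces to boundary terms (the canonical one-form): if (q,v,p) satisfies the pathwise stochastic Hamilton–Pontryagin equations (q' = v, p = (∂L/∂v)(q,v), p ∈ C¹ with p' = (∂L/∂q)(q,v) + Σ_i (∂γ_i/∂q)(q) w_i'), then for every variation (δq,δv,δp) with δq ∈ C¹([a,b],ℝⁿ) (not required to vanish at the endpoints) and δv, δp ∈ C⁰([a,b],ℝⁿ), d/dε|_{ε=0} 𝔊(q+εδq, v+εδv, p+εδp) = ⟨p(b), δq(b)⟩ − ⟨p(a), δq(a)⟩. -/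

import Mathlib

open scoped RealInnerProductSpace

lemma inner_gradient_apply {F : Type*} [NormedAddCommGroup F] [InnerProductSpace ℝ F]
    [CompleteSpace F] (f : F → ℝ) (x y : F) : ⟪gradient f x, y⟫ = fderiv ℝ f x y := by
  rw [gradient, ← InnerProductSpace.toDual_apply_apply, LinearIsometryEquiv.apply_symm_apply]

lemma paramDeriv {a b : ℝ} (hab : a ≤ b) (F F' : ℝ → ℝ → ℝ)
    (hF : ∀ ε : ℝ, ContinuousOn (F ε) (Set.Icc a b))
    (hF' : ContinuousOn (fun z : ℝ × ℝ => F' z.1 z.2) (Set.Icc (-1:ℝ) 1 ×ˢ Set.Icc a b))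
    (hd : ∀ t ∈ Set.Icc a b, ∀ ε : ℝ, HasDerivAt (fun x => F x t) (F' ε t) ε) :
    HasDerivAt (fun ε => ∫ t in a..b, F ε t) (∫ t in a..b, F' 0 t) 0 := by
  obtain ⟨C, hC⟩ := IsCompact.exists_bound_of_continuousOn
    (isCompact_Icc.prod isCompact_Icc) hF'
  have hIoc : Set.uIoc a b = Set.Ioc a b := Set.uIoc_of_le hab
  have hball : Metric.ball (0:ℝ) 1 ⊆ Set.Icc (-1:ℝ) 1 := by
    intro x hx
    rw [Metric.mem_ball, Real.dist_eq, sub_zero] at hx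
    exact abs_le.mp hx.le
  have h := intervalIntegral.hasDerivAt_integral_of_dominated_loc_of_deriv_le
    (μ := MeasureTheory.volume) (F := F) (F' := F') (x₀ := (0:ℝ)) (a := a) (b := b)
    (bound := fun _ => C) (s := Metric.ball (0:ℝ) 1) (Metric.ball_mem_nhds 0 one_pos)
    (Filter.Eventually.of_forall fun x => by
      rw [hIoc]
      exact ((hF x).mono Set.Ioc_subset_Icc_self).aestronglyMeasurable measurableSet_Ioc)
    ((hF 0).mono (by rw [Set.uIcc_of_le hab]) |>.intervalIntegrable)
    (by
      rw [hIoc]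
      have : ContinuousOn (F' 0) (Set.Icc a b) := by
        intro t ht
        exact ((hF'.comp (continuous_const.prodMk continuous_id).continuousOn
          (fun s hs => ⟨by norm_num, hs⟩)) t ht)
      exact (this.mono Set.Ioc_subset_Icc_self).aestronglyMeasurable measurableSet_Ioc)
    (Filter.Eventually.of_forall fun t ht x hx => by
      rw [hIoc] at ht
      exact hC (x, t) ⟨hball hx, Set.Ioc_subset_Icc_self ht⟩)
    intervalIntegrable_const
    (Filter.Eventually.of_forall fun t ht x _ =>
      hd t (Set.Ioc_subset_Icc_self (hIoc ▸ ht)) x)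
  exact h.2

/-- The pathwise Hamilton–Pontryagin action
`𝔊(q,v,p) = ∫_a^b [ L(q,v) + ∑_i γ_i(q) w_i' + ⟨p, q' − v⟩ ] dt`,
written as a functional of the path `q`, its derivative `q'`, the velocity `v`
and the momentum `p`. -/
noncomputable def HPaction (a b : ℝ) (n m : ℕ)
    (L : EuclideanSpace ℝ (Fin n) × EuclideanSpace ℝ (Fin n) → ℝ)
    (γ : ℕ → EuclideanSpace ℝ (Fin n) → ℝ) (w' : ℕ → ℝ → ℝ)
    (q q' v p : ℝ → EuclideanSpace ℝ (Fin n)) : ℝ :=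
  ∫ t in a..b,
    (L (q t, v t) + ∑ i ∈ Finset.range m, γ i (q t) * w' i t
      + ⟪p t, q' t - v t⟫)

/-- Along solutions of the pathwise stochastic Hamilton–Pontryagin equations
the differential of the Hamilton–Pontryagin action reduces to the boundary
terms given by the canonical one-form:
`d𝔊·(δq,δv,δp) = ⟨p(b), δq(b)⟩ − ⟨p(a), δq(a)⟩`. -/
theorem hp_action_differential_on_solutions
    (a b : ℝ) (hab : a < b) (n m : ℕ) (hn : 1 ≤ n)
    (L : EuclideanSpace ℝ (Fin n) × EuclideanSpace ℝ (Fin n) → ℝ)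
    (hL : ContDiff ℝ 2 L)
    (γ : ℕ → EuclideanSpace ℝ (Fin n) → ℝ)
    (hγ : ∀ i < m, ContDiff ℝ 2 (γ i))
    (w w' : ℕ → ℝ → ℝ)
    (hw : ∀ i < m, ∀ t ∈ Set.Icc a b, HasDerivWithinAt (w i) (w' i t) (Set.Icc a b) t)
    (hw' : ∀ i < m, ContinuousOn (w' i) (Set.Icc a b))
    (q q' v p p' : ℝ → EuclideanSpace ℝ (Fin n))
    (hq : ∀ t ∈ Set.Icc a b, HasDerivWithinAt q (q' t) (Set.Icc a b) t)
    (hq' : ContinuousOn q' (Set.Icc a b))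
    (hv : ContinuousOn v (Set.Icc a b))
    (hp : ∀ t ∈ Set.Icc a b, HasDerivWithinAt p (p' t) (Set.Icc a b) t)
    (hp' : ContinuousOn p' (Set.Icc a b))
    -- the pathwise stochastic Hamilton–Pontryagin equations
    (heq1 : ∀ t ∈ Set.Icc a b, q' t = v t)
    (heq2 : ∀ t ∈ Set.Icc a b, p t = gradient (fun u => L (q t, u)) (v t))
    (heq3 : ∀ t ∈ Set.Icc a b,
        p' t = gradient (fun x => L (x, v t)) (q t)
          + ∑ i ∈ Finset.range m, w' i t • gradient (γ i) (q t)) :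
    ∀ δq δq' δv δp : ℝ → EuclideanSpace ℝ (Fin n),
      (∀ t ∈ Set.Icc a b, HasDerivWithinAt δq (δq' t) (Set.Icc a b) t) →
      ContinuousOn δq' (Set.Icc a b) →
      ContinuousOn δv (Set.Icc a b) → ContinuousOn δp (Set.Icc a b) →
      deriv (fun ε : ℝ => HPaction a b n m L γ w'
          (fun t => q t + ε • δq t) (fun t => q' t + ε • δq' t)
          (fun t => v t + ε • δv t) (fun t => p t + ε • δp t)) 0
        = ⟪p b, δq b⟫ - ⟪p a, δq a⟫ := by
  intro δq δq' δv δp hδq hδq' hδv hδp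
  have cq : ContinuousOn q (Set.Icc a b) := fun t ht => (hq t ht).continuousWithinAt
  have cp : ContinuousOn p (Set.Icc a b) := fun t ht => (hp t ht).continuousWithinAt
  have cδq : ContinuousOn δq (Set.Icc a b) := fun t ht => (hδq t ht).continuousWithinAt
  have hLd : Differentiable ℝ L := hL.differentiable two_ne_zero
  have hγd : ∀ i < m, Differentiable ℝ (γ i) := fun i hi => (hγ i hi).differentiable two_ne_zero
  set F : ℝ → ℝ → ℝ := fun ε t =>
    L (q t + ε • δq t, v t + ε • δv t)
      + ∑ i ∈ Finset.range m, γ i (q t + ε • δq t) * w' i t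
      + ⟪p t + ε • δp t, (q' t + ε • δq' t) - (v t + ε • δv t)⟫ with hFdef
  set F' : ℝ → ℝ → ℝ := fun ε t =>
    fderiv ℝ L (q t + ε • δq t, v t + ε • δv t) (δq t, δv t)
      + ∑ i ∈ Finset.range m, fderiv ℝ (γ i) (q t + ε • δq t) (δq t) * w' i t
      + (⟪p t + ε • δp t, δq' t - δv t⟫
          + ⟪δp t, (q' t + ε • δq' t) - (v t + ε • δv t)⟫) with hF'def
  have hline : ∀ (c d : EuclideanSpace ℝ (Fin n)) (ε : ℝ),
      HasDerivAt (fun x : ℝ => c + x • d) d ε := fun c d ε => by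
    simpa using ((hasDerivAt_id ε).smul_const d).const_add c
  have hd : ∀ t ∈ Set.Icc a b, ∀ ε : ℝ, HasDerivAt (fun x => F x t) (F' ε t) ε := by
    intro t _ ε
    have h1 := hline (q t) (δq t) ε
    have h2 := hline (v t) (δv t) ε
    have h3 := hline (p t) (δp t) ε
    have h4 := hline (q' t) (δq' t) ε
    have hL1 : HasDerivAt (fun x : ℝ => L (q t + x • δq t, v t + x • δv t))
        (fderiv ℝ L (q t + ε • δq t, v t + ε • δv t) (δq t, δv t)) ε :=
      (hLd _).hasFDerivAt.comp_hasDerivAt ε (h1.prodMk h2)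
    have hsum : HasDerivAt (fun x : ℝ => ∑ i ∈ Finset.range m, γ i (q t + x • δq t) * w' i t)
        (∑ i ∈ Finset.range m, fderiv ℝ (γ i) (q t + ε • δq t) (δq t) * w' i t) ε :=
      HasDerivAt.fun_sum fun i hi =>
        (((hγd i (Finset.mem_range.mp hi)) _).hasFDerivAt.comp_hasDerivAt ε h1).mul_const (w' i t)
    exact (hL1.add hsum).add (HasDerivAt.inner ℝ h3 (h4.sub h2))
  have hF : ∀ ε : ℝ, ContinuousOn (F ε) (Set.Icc a b) := by
    intro ε
    have hA : ContinuousOn (fun t => q t + ε • δq t) (Set.Icc a b) :=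
      cq.add (cδq.const_smul ε)
    have hB : ContinuousOn (fun t => v t + ε • δv t) (Set.Icc a b) :=
      hv.add (hδv.const_smul ε)
    have hP : ContinuousOn (fun t => p t + ε • δp t) (Set.Icc a b) :=
      cp.add (hδp.const_smul ε)
    have hQ : ContinuousOn (fun t => q' t + ε • δq' t) (Set.Icc a b) :=
      hq'.add (hδq'.const_smul ε)
    exact ((hL.continuous.comp_continuousOn (hA.prodMk hB)).add
      (continuousOn_finset_sum _ fun i hi =>
        ((hγ i (Finset.mem_range.mp hi)).continuous.comp_continuousOn hA).mul
          (hw' i (Finset.mem_range.mp hi)))).add (hP.inner (hQ.sub hB))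
  have hF' : ContinuousOn (fun z : ℝ × ℝ => F' z.1 z.2)
      (Set.Icc (-1:ℝ) 1 ×ˢ Set.Icc a b) := by
    have csnd : ∀ {α : Type} [TopologicalSpace α] {g : ℝ → α}, ContinuousOn g (Set.Icc a b) →
        ContinuousOn (fun z : ℝ × ℝ => g z.2) (Set.Icc (-1:ℝ) 1 ×ˢ Set.Icc a b) :=
      fun hg => hg.comp continuous_snd.continuousOn (fun z hz => hz.2)
    have hA2 : ContinuousOn (fun z : ℝ × ℝ => q z.2 + z.1 • δq z.2)
        (Set.Icc (-1:ℝ) 1 ×ˢ Set.Icc a b) :=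
      (csnd cq).add (continuous_fst.continuousOn.smul (csnd cδq))
    have hB2 : ContinuousOn (fun z : ℝ × ℝ => v z.2 + z.1 • δv z.2)
        (Set.Icc (-1:ℝ) 1 ×ˢ Set.Icc a b) :=
      (csnd hv).add (continuous_fst.continuousOn.smul (csnd hδv))
    have hP2 : ContinuousOn (fun z : ℝ × ℝ => p z.2 + z.1 • δp z.2)
        (Set.Icc (-1:ℝ) 1 ×ˢ Set.Icc a b) :=
      (csnd cp).add (continuous_fst.continuousOn.smul (csnd hδp))
    have hQ2 : ContinuousOn (fun z : ℝ × ℝ => q' z.2 + z.1 • δq' z.2)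
        (Set.Icc (-1:ℝ) 1 ×ˢ Set.Icc a b) :=
      (csnd hq').add (continuous_fst.continuousOn.smul (csnd hδq'))
    exact ((((hL.continuous_fderiv two_ne_zero).comp_continuousOn (hA2.prodMk hB2)).clm_apply
      ((csnd cδq).prodMk (csnd hδv))).add
      (continuousOn_finset_sum _ fun i hi =>
        ((((hγ i (Finset.mem_range.mp hi)).continuous_fderiv two_ne_zero).comp_continuousOn
          hA2).clm_apply (csnd cδq)).mul (csnd (hw' i (Finset.mem_range.mp hi))))).add
      ((hP2.inner ((csnd hδq').sub (csnd hδv))).add ((csnd hδp).inner (hQ2.sub hB2)))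
  have hderivInt := paramDeriv hab.le F F' hF hF' hd
  have hEq : (fun ε : ℝ => HPaction a b n m L γ w'
      (fun t => q t + ε • δq t) (fun t => q' t + ε • δq' t)
      (fun t => v t + ε • δv t) (fun t => p t + ε • δp t))
      = fun ε => ∫ t in a..b, F ε t := rfl
  rw [hEq, hderivInt.deriv]
  have key : ∀ t ∈ Set.Icc a b, F' 0 t = ⟪p t, δq' t⟫ + ⟪p' t, δq t⟫ := by
    intro t ht
    have hq'v := heq1 t ht
    have hsplit : fderiv ℝ L (q t, v t) (δq t, δv t)
        = fderiv ℝ (fun x => L (x, v t)) (q t) (δq t)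
          + fderiv ℝ (fun u => L (q t, u)) (v t) (δv t) := by
      have hD := (hLd (q t, v t)).hasFDerivAt
      have h1 : HasFDerivAt (fun x => L (x, v t))
          ((fderiv ℝ L (q t, v t)).comp (ContinuousLinearMap.inl ℝ _ _)) (q t) :=
        hD.comp (q t) (hasFDerivAt_prodMk_left (q t) (v t))
      have h2 : HasFDerivAt (fun u => L (q t, u))
          ((fderiv ℝ L (q t, v t)).comp (ContinuousLinearMap.inr ℝ _ _)) (v t) :=
        hD.comp (v t) (hasFDerivAt_prodMk_right (q t) (v t))
      rw [h1.fderiv, h2.fderiv]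
      simp only [ContinuousLinearMap.comp_apply, ContinuousLinearMap.inl_apply,
        ContinuousLinearMap.inr_apply]
      rw [← map_add]
      simp
    have hgrad1 : ⟪p' t, δq t⟫ = fderiv ℝ (fun x => L (x, v t)) (q t) (δq t)
        + ∑ i ∈ Finset.range m, fderiv ℝ (γ i) (q t) (δq t) * w' i t := by
      rw [heq3 t ht, inner_add_left, inner_gradient_apply, sum_inner]
      congr 1
      refine Finset.sum_congr rfl fun i hi => ?_
      rw [real_inner_smul_left, inner_gradient_apply]
      ring
    have hgrad2 : ⟪p t, δv t⟫ = fderiv ℝ (fun u => L (q t, u)) (v t) (δv t) := by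
      rw [heq2 t ht, inner_gradient_apply]
    show fderiv ℝ L (q t + (0:ℝ) • δq t, v t + (0:ℝ) • δv t) (δq t, δv t)
      + ∑ i ∈ Finset.range m, fderiv ℝ (γ i) (q t + (0:ℝ) • δq t) (δq t) * w' i t
      + (⟪p t + (0:ℝ) • δp t, δq' t - δv t⟫
          + ⟪δp t, (q' t + (0:ℝ) • δq' t) - (v t + (0:ℝ) • δv t)⟫) = _
    simp only [zero_smul, add_zero]
    rw [hsplit, hq'v, sub_self, inner_zero_right, inner_sub_right, hgrad2]
    rw [hgrad1]
    ring
  have hcongr : ∫ t in a..b, F' 0 t = ∫ t in a..b, (⟪p t, δq' t⟫ + ⟪p' t, δq t⟫) :=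
    intervalIntegral.integral_congr fun t ht =>
      key t (by rwa [Set.uIcc_of_le hab.le] at ht)
  rw [hcongr]
  have hcont : ContinuousOn (fun t => ⟪p t, δq t⟫) (Set.Icc a b) := cp.inner cδq
  have hderiv : ∀ t ∈ Set.Ioo a b, HasDerivWithinAt (fun t => ⟪p t, δq t⟫)
      (⟪p t, δq' t⟫ + ⟪p' t, δq t⟫) (Set.Ioi t) t := by
    intro t ht
    have hmem : Set.Icc a b ∈ nhds t := Icc_mem_nhds ht.1 ht.2
    exact (HasDerivAt.inner ℝ ((hp t (Set.Ioo_subset_Icc_self ht)).hasDerivAt hmem)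
      ((hδq t (Set.Ioo_subset_Icc_self ht)).hasDerivAt hmem)).hasDerivWithinAt
  have hint : IntervalIntegrable (fun t => ⟪p t, δq' t⟫ + ⟪p' t, δq t⟫)
      MeasureTheory.volume a b :=
    (by rw [Set.uIcc_of_le hab.le]; exact (cp.inner hδq').add (hp'.inner cδq) :
      ContinuousOn _ (Set.uIcc a b)).intervalIntegrable
  exact intervalIntegral.integral_eq_sub_of_hasDeriv_right_of_le hab.le hcont hderiv hint
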